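/- Let 0 < |x| < φ with x₁ > 0, x₂ ∈ ℝ, and set A = ∫_{|x|/φ}^{1} (|x₂| φ² s / √(φ²s² − |x|²)) · (1/(φ²s² − x₁²)) ds. Then A = |arctan(a x₂/(|x|+x₁)) + arctan(a x₂/(|x|−x₁))| where a = √((φ−|x|)/(φ+|x|)); in particular A ≤ π. -/

import Mathlib

open Real

/-- Closed form of the integral
`A = ∫_{|x|/φ}^1 (|x₂|φ²s/√(φ²s²−|x|²)) (1/(φ²s²−x₁²)) ds` as a sum of arctangents,
with `a = √((φ−|x|)/(φ+|x|))`; in particular `A ≤ π`. -/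
theorem stmt17 (φ x₁ x₂ r a : ℝ)
    (hr : r = Real.sqrt (x₁ ^ 2 + x₂ ^ 2))
    (ha : a = Real.sqrt ((φ - r) / (φ + r)))
    (h1 : 0 < x₁) (h2 : x₁ < r) (h3 : r < φ) :
    (∫ s in (r / φ)..1,
        |x₂| * φ ^ 2 * s / Real.sqrt (φ ^ 2 * s ^ 2 - r ^ 2) *
          (1 / (φ ^ 2 * s ^ 2 - x₁ ^ 2)))
      = |Real.arctan (a * x₂ / (r + x₁)) + Real.arctan (a * x₂ / (r - x₁))| ∧
    (∫ s in (r / φ)..1,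
        |x₂| * φ ^ 2 * s / Real.sqrt (φ ^ 2 * s ^ 2 - r ^ 2) *
          (1 / (φ ^ 2 * s ^ 2 - x₁ ^ 2))) ≤ Real.pi := by
  have hr0 : 0 < r := h1.trans h2
  have hφ0 : 0 < φ := hr0.trans h3
  have hr2 : r ^ 2 = x₁ ^ 2 + x₂ ^ 2 := by
    rw [hr]; exact Real.sq_sqrt (by positivity)
  have hx2sq : x₂ ^ 2 = r ^ 2 - x₁ ^ 2 := by linarith
  have hx2 : x₂ ≠ 0 := by
    intro h
    rw [h] at hx2sq
    nlinarith
  have hax2 : |x₂| ≠ 0 := abs_ne_zero.mpr hx2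
  have haquot : (0:ℝ) < (φ - r) / (φ + r) := by
    apply div_pos <;> linarith
  have ha0 : 0 < a := by rw [ha]; exact Real.sqrt_pos.mpr haquot
  have ha2 : a ^ 2 = (φ - r) / (φ + r) := by
    rw [ha]; exact Real.sq_sqrt haquot.le
  have ha2lt : a ^ 2 < 1 := by
    rw [ha2, div_lt_one (by linarith)]; linarith
  have hkey : Real.sqrt (φ ^ 2 - r ^ 2) = a * (φ + r) := by
    rw [show φ ^ 2 - r ^ 2 = ((φ - r) / (φ + r)) * (φ + r) ^ 2 by
      field_simp; ring]
    rw [Real.sqrt_mul haquot.le, Real.sqrt_sq (by linarith), ha]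
  -- the integrand and antiderivative
  set g : ℝ → ℝ := fun s =>
    |x₂| * φ ^ 2 * s / Real.sqrt (φ ^ 2 * s ^ 2 - r ^ 2) *
      (1 / (φ ^ 2 * s ^ 2 - x₁ ^ 2)) with hg
  set F : ℝ → ℝ := fun s => Real.arctan (Real.sqrt (φ ^ 2 * s ^ 2 - r ^ 2) / |x₂|) with hF
  have hab : r / φ ≤ 1 := by
    rw [div_le_one hφ0]; linarith
  have hcont : ContinuousOn F (Set.Icc (r / φ) 1) := by
    apply Continuous.continuousOn
    exact Real.continuous_arctan.comp
      ((((continuous_const.mul ((continuous_pow 2))).sub continuous_const).sqrt).div_const _)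
  have hFderiv : ∀ s ∈ Set.Ioo (r / φ) 1, HasDerivAt F (g s) s := by
    intro s hs
    have hs1 : r / φ < s := hs.1
    have hs0 : 0 < s := lt_of_lt_of_le (by positivity) hs1.le
    have hu : 0 < φ ^ 2 * s ^ 2 - r ^ 2 := by
      have : r < φ * s := by
        rw [div_lt_iff₀ hφ0] at hs1; linarith [hs1]
      nlinarith
    have hu2 : 0 < φ ^ 2 * s ^ 2 - x₁ ^ 2 := by nlinarith
    have hsqrt : 0 < Real.sqrt (φ ^ 2 * s ^ 2 - r ^ 2) := Real.sqrt_pos.mpr hu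
    have h0 : HasDerivAt (fun t : ℝ => φ ^ 2 * t ^ 2 - r ^ 2) (φ ^ 2 * (2 * s)) s := by
      simpa using ((hasDerivAt_pow 2 s).const_mul (φ ^ 2)).sub_const (r ^ 2)
    have h1' := (h0.sqrt hu.ne').div_const |x₂|
    have h2' := h1'.arctan
    convert h2' using 1
    have hss : Real.sqrt (φ ^ 2 * s ^ 2 - r ^ 2) ^ 2 = φ ^ 2 * s ^ 2 - r ^ 2 :=
      Real.sq_sqrt hu.le
    have habs2 : |x₂| ^ 2 = x₂ ^ 2 := sq_abs x₂
    rw [hg]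
    field_simp
    linear_combination habs2 + hss + hx2sq
  have hgpos : ∀ s ∈ Set.Ioo (r / φ) 1, 0 ≤ g s := by
    intro s hs
    have hs1 : r / φ < s := hs.1
    have hs0 : 0 < s := lt_of_lt_of_le (by positivity) hs1.le
    have hu : 0 < φ ^ 2 * s ^ 2 - r ^ 2 := by
      have : r < φ * s := by
        rw [div_lt_iff₀ hφ0] at hs1; linarith [hs1]
      nlinarith
    have hu2 : 0 < φ ^ 2 * s ^ 2 - x₁ ^ 2 := by nlinarith
    have hsqrt : 0 < Real.sqrt (φ ^ 2 * s ^ 2 - r ^ 2) := Real.sqrt_pos.mpr hu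
    rw [hg]
    positivity
  have hint : IntervalIntegrable g MeasureTheory.volume (r / φ) 1 := by
    rw [intervalIntegrable_iff_integrableOn_Ioc_of_le hab]
    exact intervalIntegral.integrableOn_deriv_of_nonneg hcont hFderiv hgpos
  have hFTC : (∫ s in (r / φ)..1, g s) = F 1 - F (r / φ) :=
    intervalIntegral.integral_eq_sub_of_hasDeriv_right_of_le hab hcont
      (fun x hx => (hFderiv x hx).hasDerivWithinAt) hint
  have hF0 : F (r / φ) = 0 := by
    rw [hF]
    have : φ ^ 2 * (r / φ) ^ 2 - r ^ 2 = 0 := by field_simp; ring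
    simp [this]
  have hF1 : F 1 = Real.arctan (Real.sqrt (φ ^ 2 - r ^ 2) / |x₂|) := by
    rw [hF]; norm_num
  have hval : (∫ s in (r / φ)..1, g s)
      = Real.arctan (Real.sqrt (φ ^ 2 - r ^ 2) / |x₂|) := by
    rw [hFTC, hF0, hF1, sub_zero]
  -- now compute the RHS
  have hrx1 : 0 < r + x₁ := by linarith
  have hrx1' : 0 < r - x₁ := by linarith
  set p := a * x₂ / (r + x₁) with hp
  set q := a * x₂ / (r - x₁) with hq
  have hpq : p * q = a ^ 2 := by
    rw [hp, hq]
    field_simp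
    linear_combination hx2sq
  have hsum2 : p + q = 2 * a * r / x₂ := by
    rw [hp, hq]
    field_simp
    linear_combination (2 * r) * hx2sq
  have ha1m : 1 - a ^ 2 = 2 * r / (φ + r) := by
    rw [ha2]; field_simp; ring
  have hratio : (p + q) / (1 - p * q) = Real.sqrt (φ ^ 2 - r ^ 2) / x₂ := by
    rw [hpq, hsum2, ha1m, hkey]
    field_simp
  have hsum : Real.arctan p + Real.arctan q
      = Real.arctan (Real.sqrt (φ ^ 2 - r ^ 2) / x₂) := by
    rw [Real.arctan_add (by rw [hpq]; exact ha2lt), hratio]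
  have habsarc : ∀ t : ℝ, |Real.arctan t| = Real.arctan |t| := by
    intro t
    rcases le_or_gt 0 t with h | h
    · have h0 : 0 ≤ Real.arctan t := by
        simpa using Real.arctan_strictMono.monotone h
      rw [abs_of_nonneg h, abs_of_nonneg h0]
    · have h0 : Real.arctan t < 0 := by
        simpa using Real.arctan_strictMono h
      rw [abs_of_neg h, abs_of_neg h0, Real.arctan_neg]
  have hrhs : |Real.arctan p + Real.arctan q|
      = Real.arctan (Real.sqrt (φ ^ 2 - r ^ 2) / |x₂|) := by
    rw [hsum, habsarc, abs_div, abs_of_nonneg (Real.sqrt_nonneg _)]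
  constructor
  · rw [hval, hrhs]
  · rw [hval]
    have := Real.arctan_lt_pi_div_two (Real.sqrt (φ ^ 2 - r ^ 2) / |x₂|)
    linarith [Real.pi_pos]
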